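/- Fix a time query (A,B,t0). Let P and Q be consistent arrival connections at the same station. If for every consistent arrival connection R having Q as a prefix, replacing the prefix Q by P yields a consistent arrival connection R' with arr(R') ≤ arr(R), then P dominates Q. -/

import Mathlib

/-- A timetable: stations, stop events, minimum transfer times, and for each stop
event the (daily, hence time-independent) residence times: between the previous
arrival and the departure of the stop event (`resD`, `none` if the train begins
there) and between the arrival and the next departure (`resA`, `none` if the
train ends there). -/
structure Timetable where
  Station : Type
  StopEvent : Type
  /-- minimum transfer time at a station -/
  transfer : Station → ℕ
  /-- residence time between previous arrival and departure of a stop event -/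
  resD : StopEvent → Option ℕ
  /-- residence time between arrival and next departure of a stop event -/
  resA : StopEvent → Option ℕ

/-- `cycleDiff t t'` is the smallest nonnegative `ℓ` with `ℓ ≡ t' - t (mod 1440)`. -/
def cycleDiff (t t' : ℕ) : ℕ := (t' + 1440 - t) % 1440

/-- An elementary connection `c = (Z1, Z2, S1, S2, t_d, t_a)`. -/
structure EC (T : Timetable) where
  Z1 : T.StopEvent
  Z2 : T.StopEvent
  St1 : T.Station
  St2 : T.Station
  td : ℕ
  ta : ℕ
  htd : td ≤ 1439
  hta : ta ≤ 1439

/-- The length of an elementary connection. -/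
def EC.len {T : Timetable} (c : EC T) : ℕ := cycleDiff c.td c.ta

/-- A leg of a connection: an elementary connection together with its actual
departure and arrival times (minutes from the first day). -/
structure Leg (T : Timetable) where
  c : EC T
  dep : ℤ
  arr : ℤ

/-- A connection: a nonempty sequence of legs. -/
structure Conn (T : Timetable) where
  legs : List (Leg T)
  ne : legs ≠ []

namespace Conn

variable {T : Timetable}

/-- departure time `dep(P) = dep_1(P)` -/
def dep (P : Conn T) : ℤ := (P.legs.head P.ne).dep
/-- arrival time `arr(P) = arr_k(P)` -/
def arr (P : Conn T) : ℤ := (P.legs.getLast P.ne).arr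
/-- departure station -/
def S1 (P : Conn T) : T.Station := (P.legs.head P.ne).c.St1
/-- arrival station -/
def S2 (P : Conn T) : T.Station := (P.legs.getLast P.ne).c.St2
/-- departure stop event -/
def Z1 (P : Conn T) : T.StopEvent := (P.legs.head P.ne).c.Z1
/-- arrival stop event -/
def Z2 (P : Conn T) : T.StopEvent := (P.legs.getLast P.ne).c.Z2

/-- Shift all times of a connection by `t` minutes (e.g. the daily copy of a
daily operating connection, `t = a * 1440`). -/
def shift (P : Conn T) (t : ℤ) : Conn T :=
  ⟨P.legs.map (fun l => ⟨l.c, l.dep + t, l.arr + t⟩), by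
    have := P.ne; simp_all⟩

/-- Concatenation of two connections (the second appended after the first,
keeping all given times). -/
def concat (P Q : Conn T) : Conn T :=
  ⟨P.legs ++ Q.legs, by have := P.ne; simp_all⟩

end Conn

/-- Conditions on a single leg of a consistent connection: the departure time is
nonnegative, agrees with the timetabled departure time modulo 1440, and the
arrival time is the departure time plus the length. -/
def LegOK {T : Timetable} (l : Leg T) : Prop :=
  0 ≤ l.dep ∧ l.dep % 1440 = (l.c.td : ℤ) ∧ l.arr = l.dep + (l.c.len : ℤ)

/-- Conditions on two consecutive legs of a consistent connection: stations
match, and waiting respects the minimum transfer time unless it is the same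
train (same stop event). -/
def AdjOK (T : Timetable) (l l' : Leg T) : Prop :=
  l.c.St2 = l'.c.St1 ∧
  (l'.c.Z1 = l.c.Z2 → l.arr ≤ l'.dep) ∧
  (l'.c.Z1 ≠ l.c.Z2 → l.arr + (T.transfer l.c.St2 : ℤ) ≤ l'.dep)

/-- A connection is consistent. -/
def Consistent (T : Timetable) (P : Conn T) : Prop :=
  (∀ l ∈ P.legs, LegOK l) ∧ P.legs.Chain' (AdjOK T)

/-- `parr(P)`: previous arrival time of the stop event `Z1(P)`, or `none` if the
train begins there. -/
def parr (T : Timetable) (P : Conn T) : Option ℤ :=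
  (T.resD P.Z1).map (fun r => P.dep - (r : ℤ))

/-- `ndep(P)`: next departure time of the stop event `Z2(P)`, or `none` if the
train ends there. -/
def ndep (T : Timetable) (P : Conn T) : Option ℤ :=
  (T.resA P.Z2).map (fun r => P.arr + (r : ℤ))

/-- `P` is a critical departure: `parr(P) ≠ ⊥` and
`dep(P) - parr(P) < transfer(S1(P))`. -/
def CriticalDep (T : Timetable) (P : Conn T) : Prop :=
  ∃ t, parr T P = some t ∧ P.dep - t < (T.transfer P.S1 : ℤ)

/-- `P` is a critical arrival: `ndep(P) ≠ ⊥` and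
`ndep(P) - arr(P) < transfer(S2(P))`. -/
def CriticalArr (T : Timetable) (P : Conn T) : Prop :=
  ∃ t, ndep T P = some t ∧ t - P.arr < (T.transfer P.S2 : ℤ)

/-- Domination between connections. -/
def Dominates (T : Timetable) (P Q : Conn T) : Prop :=
  (P.S1 = Q.S1 ∧ P.S2 = Q.S2) ∧
  (Q.dep ≤ P.dep ∧ P.arr ≤ Q.arr) ∧
  (Q.Z1 = P.Z1 ∨ ¬ CriticalDep T Q ∨
    ∀ t, parr T Q = some t → (T.transfer P.S1 : ℤ) ≤ P.dep - t) ∧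
  (Q.Z2 = P.Z2 ∨ ¬ CriticalArr T Q ∨
    ∀ t, ndep T Q = some t → (T.transfer P.S2 : ℤ) ≤ t - P.arr)

/-- Domination between arrival connections. -/
def ADominates (T : Timetable) (P Q : Conn T) : Prop :=
  P.S2 = Q.S2 ∧ P.arr ≤ Q.arr ∧
  (Q.Z2 = P.Z2 ∨ ¬ CriticalArr T Q ∨
    ∀ t, ndep T Q = some t → (T.transfer P.S2 : ℤ) ≤ t - P.arr)

/-- A consistent arrival connection w.r.t. a time query with departure station
`A` and departure time `t0`: a consistent connection departing from `A` not
before `t0`. -/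
def IsArrConn (T : Timetable) (A : T.Station) (t0 : ℤ) (P : Conn T) : Prop :=
  Consistent T P ∧ P.S1 = A ∧ t0 ≤ P.dep

/-- The connection obtained from a connection `R = pre ++ Q ++ suf` (with `Q` a
subconnection) by replacing `Q` by `P`. -/
def replaced (T : Timetable) (pre suf : List (Leg T)) (P : Conn T) : Conn T :=
  ⟨pre ++ P.legs ++ suf, by have := P.ne; simp_all⟩

/-- Fix a time query `(A,B,t0)`. Let `P` and `Q` be consistent
arrival connections at the same station. If for every consistent arrival
connection `R` having `Q` as a prefix, replacing the prefix `Q` by `P` yields a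
consistent arrival connection `R'` with `arr(R') ≤ arr(R)`, then `P` dominates
`Q`. -/
theorem replaceable_adominates (T : Timetable) (A B : T.Station) (t0 : ℤ)
    (P Q : Conn T) (hP : IsArrConn T A t0 P) (hQ : IsArrConn T A t0 Q)
    (hS : P.S2 = Q.S2)
    (hrep : ∀ suf : List (Leg T),
      IsArrConn T A t0 (replaced T [] suf Q) →
        IsArrConn T A t0 (replaced T [] suf P) ∧
        (replaced T [] suf P).arr ≤ (replaced T [] suf Q).arr) :
    ADominates T P Q := by
  obtain ⟨⟨hQleg, hQch⟩, hQ1, hQt⟩ := hQ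
  have hQeq : replaced T [] [] Q = Q := by
    cases Q with | mk legs ne => simp [replaced]
  have hPeq : replaced T [] [] P = P := by
    cases P with | mk legs ne => simp [replaced]
  have h0 := hrep [] (by rw [hQeq]; exact ⟨⟨hQleg, hQch⟩, hQ1, hQt⟩)
  rw [hQeq, hPeq] at h0
  refine ⟨hS, h0.2, ?_⟩
  by_cases hZ : Q.Z2 = P.Z2
  · exact Or.inl hZ
  by_cases hcrit : CriticalArr T Q
  · right; right
    intro t ht
    obtain ⟨r, hr, hteq⟩ : ∃ r, T.resA Q.Z2 = some r ∧ Q.arr + (r : ℤ) = t := by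
      rw [ndep] at ht
      cases hra : T.resA Q.Z2 with
      | none => rw [hra] at ht; simp at ht
      | some r =>
        rw [hra] at ht
        simp only [Option.map_some, Option.bind_some, Option.map_eq_some_iff,
          Option.some_inj] at ht
        exact ⟨r, rfl, by simpa using ht⟩
    have hQarr0 : 0 ≤ Q.arr := by
      have hl := hQleg (Q.legs.getLast Q.ne) (List.getLast_mem Q.ne)
      have h1 := hl.1
      have h2 := hl.2.2
      show (0:ℤ) ≤ (Q.legs.getLast Q.ne).arr
      rw [h2]; positivity
    have ht0 : 0 ≤ t := by omega
    let c' : EC T :=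
      { Z1 := Q.Z2, Z2 := Q.Z2, St1 := Q.S2, St2 := Q.S2,
        td := (t % 1440).toNat, ta := (t % 1440).toNat,
        htd := by omega, hta := by omega }
    have hlen : c'.len = 0 := by simp [EC.len, cycleDiff, c']
    let l' : Leg T := ⟨c', t, t⟩
    have hl'ok : LegOK l' := by
      refine ⟨ht0, ?_, ?_⟩
      · show t % 1440 = ((t % 1440).toNat : ℤ)
        omega
      · show t = t + (c'.len : ℤ)
        rw [hlen]; simp
    have hR : IsArrConn T A t0 (replaced T [] [l'] Q) := by
      refine ⟨⟨?_, ?_⟩, ?_, ?_⟩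
      · intro l hl
        simp only [replaced, List.nil_append, List.mem_append,
          List.mem_singleton] at hl
        rcases hl with hl | hl
        · exact hQleg l hl
        · rw [hl]; exact hl'ok
      · show (Q.legs ++ [l']).Chain' (AdjOK T)
        unfold List.Chain'
        rw [List.isChain_append]
        refine ⟨hQch, List.isChain_singleton _, ?_⟩
        intro x hx y hy
        rw [List.getLast?_eq_getLast Q.ne, Option.mem_def,
          Option.some_inj] at hx
        simp only [List.head?_cons, Option.mem_def, Option.some_inj] at hy
        subst hx; subst hy
        refine ⟨rfl, fun _ => ?_, fun h => absurd rfl h⟩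
        show (Q.legs.getLast Q.ne).arr ≤ t
        have hQa : (Q.legs.getLast Q.ne).arr = Q.arr := rfl
        omega
      · show ((Q.legs ++ [l']).head (by simp)).c.St1 = A
        rw [List.head_append_of_ne_nil Q.ne]
        exact hQ1
      · show t0 ≤ ((Q.legs ++ [l']).head (by simp)).dep
        rw [List.head_append_of_ne_nil Q.ne]
        exact hQt
    obtain ⟨⟨hP'leg, hP'ch⟩, _, _⟩ := (hrep [l'] hR).1
    have hch : (P.legs ++ [l']).Chain' (AdjOK T) := hP'ch
    unfold List.Chain' at hch
    rw [List.isChain_append] at hch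
    have hadj : AdjOK T (P.legs.getLast P.ne) l' := by
      refine hch.2.2 _ ?_ _ ?_
      · rw [List.getLast?_eq_getLast P.ne]; rfl
      · rfl
    have hne : l'.c.Z1 ≠ (P.legs.getLast P.ne).c.Z2 := by
      show Q.Z2 ≠ P.Z2
      exact hZ
    have := hadj.2.2 hne
    show (T.transfer P.S2 : ℤ) ≤ t - P.arr
    have : P.arr + (T.transfer P.S2 : ℤ) ≤ t := this
    omega
  · exact Or.inr (Or.inl hcrit)
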